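/- arXiv:1212.6037 — 2 statements merged into one kernel-verified Lean document; each statement's English description precedes it below -/
import Mathlib

section
/- Let A and M be real symmetric positive definite n×n matrices and γ a real number. Then A + i γ M (as a complex matrix) is invertible, and for every real vector w, the real part of (A + i γ M)⁻¹ w equals (A + γ² M A⁻¹ M)⁻¹ w. -/
open Matrix Complex

private lemma mapC_mul {n : ℕ} (X Y : Matrix (Fin n) (Fin n) ℝ) :
    (X * Y).map (Complex.ofReal) = X.map Complex.ofReal * Y.map Complex.ofReal := by
  ext i j
  simp [Matrix.mul_apply, Matrix.map_apply]

private lemma mapC_add {n : ℕ} (X Y : Matrix (Fin n) (Fin n) ℝ) :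
    (X + Y).map (Complex.ofReal) = X.map Complex.ofReal + Y.map Complex.ofReal := by
  ext i j; simp

private lemma mapC_smul {n : ℕ} (r : ℝ) (X : Matrix (Fin n) (Fin n) ℝ) :
    (r • X).map (Complex.ofReal) = (r : ℂ) • X.map Complex.ofReal := by
  ext i j; simp

private lemma mapC_one {n : ℕ} :
    (1 : Matrix (Fin n) (Fin n) ℝ).map (Complex.ofReal) = 1 := by
  ext i j
  by_cases h : i = j <;> simp [Matrix.one_apply, h]

theorem stmt_1 {n : ℕ} (A M : Matrix (Fin n) (Fin n) ℝ)
    (hA : A.PosDef) (hM : M.PosDef) (γ : ℝ) :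
    IsUnit (A.map (Complex.ofReal) + Complex.I • γ • M.map (Complex.ofReal)) ∧
    ∀ (w : Fin n → ℝ) (i : Fin n),
      (((A.map (Complex.ofReal) + Complex.I • γ • M.map (Complex.ofReal))⁻¹
          *ᵥ fun j => (w j : ℂ)) i).re
        = ((A + γ ^ 2 • (M * A⁻¹ * M))⁻¹ *ᵥ w) i := by
  set C : Matrix (Fin n) (Fin n) ℝ := A + γ ^ 2 • (M * A⁻¹ * M) with hCdef
  have hAinv : (A⁻¹).PosDef := hA.inv
  have hPSD : (M * A⁻¹ * M).PosSemidef := by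
    have h := hAinv.posSemidef.mul_mul_conjTranspose_same M
    rwa [hM.isHermitian.eq] at h
  have hPSD2 : (γ ^ 2 • (M * A⁻¹ * M)).PosSemidef := by
    constructor
    · show _ = _
      rw [Matrix.conjTranspose_smul, star_trivial, hPSD.1.eq]
    · intro x
      exact (hPSD.smul (sq_nonneg γ)).2 x
  have hCpd : C.PosDef := hA.add_posSemidef hPSD2
  have hCC : C * C⁻¹ = 1 := mul_nonsing_inv C (isUnit_iff_isUnit_det _ |>.1 hCpd.isUnit)
  have hAA : A * A⁻¹ = 1 := mul_nonsing_inv A (isUnit_iff_isUnit_det _ |>.1 hA.isUnit)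
  -- real identities
  set D : Matrix (Fin n) (Fin n) ℝ := A⁻¹ * M * C⁻¹ with hDdef
  have expand : ∀ Z : Matrix (Fin n) (Fin n) ℝ,
      C * Z = A * Z + γ ^ 2 • (M * (A⁻¹ * (M * Z))) := by
    intro Z
    rw [hCdef, add_mul, smul_mul_assoc]
    simp only [Matrix.mul_assoc]
  have h1 : A * C⁻¹ + γ ^ 2 • (M * D) = 1 := by
    have e := expand C⁻¹
    rw [hCC] at e
    rw [hDdef]
    simp only [Matrix.mul_assoc]
    exact e.symm
  have h2 : M * C⁻¹ = A * D := by
    rw [hDdef, ← Matrix.mul_assoc, ← Matrix.mul_assoc, hAA, Matrix.one_mul]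
  -- complex setup
  set a := A.map Complex.ofReal
  set m := M.map Complex.ofReal
  set cinv := (C⁻¹).map Complex.ofReal
  set d := D.map Complex.ofReal
  set B := a + Complex.I • γ • m with hBdef
  have hsm : Complex.I • γ • m = (Complex.I * γ) • m := by
    ext i j; simp [Matrix.smul_apply, Complex.real_smul]; ring
  set X := cinv + (-(Complex.I * γ)) • d with hXdef
  have c1 : a * cinv + ((γ : ℂ)) ^ 2 • (m * d) = 1 := by
    have := congrArg (fun Z => Z.map Complex.ofReal) h1
    simpa [mapC_add, mapC_mul, mapC_smul, mapC_one] using this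
  have c2 : m * cinv - a * d = 0 := by
    have := congrArg (fun Z => Z.map Complex.ofReal) h2
    simp only [mapC_mul] at this
    rw [sub_eq_zero]
    exact this
  have key : B * X = 1 := by
    rw [hBdef, hXdef, hsm]
    rw [add_mul, mul_add, mul_add, smul_mul_assoc, smul_mul_assoc,
      mul_smul_comm, mul_smul_comm, smul_smul]
    have e : (Complex.I * γ) * (-(Complex.I * γ)) = (γ : ℂ) ^ 2 := by
      rw [mul_neg]
      rw [show Complex.I * ↑γ * (Complex.I * ↑γ) = Complex.I * Complex.I * (γ * γ) by ring]
      simp [Complex.I_mul_I]; ring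
    rw [e]
    have : a * cinv + -(Complex.I * ↑γ) • (a * d) + ((Complex.I * ↑γ) • (m * cinv)
        + (γ : ℂ) ^ 2 • (m * d))
        = (a * cinv + (γ : ℂ) ^ 2 • (m * d)) + (Complex.I * ↑γ) • (m * cinv - a * d) := by
      rw [smul_sub]; module
    rw [this, c1, c2, smul_zero, add_zero]
  have hBunit : IsUnit B := by
    refine (isUnit_iff_isUnit_det B).2 ?_
    exact IsUnit.of_mul_eq_one X.det (by rw [← det_mul, key, det_one])
  refine ⟨by simpa [hBdef] using hBunit, ?_⟩
  have hBinv : B⁻¹ = X := inv_eq_right_inv key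
  intro w i
  show (((B)⁻¹ *ᵥ fun j => ((w j : ℂ))) i).re = (C⁻¹ *ᵥ w) i
  rw [hBinv, hXdef]
  simp only [Matrix.mulVec, dotProduct, Matrix.add_apply, Matrix.smul_apply,
    Matrix.map_apply, smul_eq_mul]
  rw [Complex.re_sum]
  refine Finset.sum_congr rfl fun j _ => ?_
  show ((cinv i j + -(Complex.I * ↑γ) * d i j) * (w j : ℂ)).re = C⁻¹ i j * w j
  simp [cinv, d, Matrix.map_apply, Complex.add_re, Complex.mul_re]
end

section
/- In a real Hilbert space H, let P : H → H be a bounded linear projection (P² = P) with P ≠ 0 and P ≠ id. Then the operator norms satisfy ‖id − P‖ = ‖P‖. -/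
theorem aux_scalar (c s t A : ℝ) (hc : 1 ≤ c) (ht : 0 < t) (hs : 0 ≤ s)
    (hCS : A ≤ s * t)
    (key3 : t ^ 2 * (s ^ 2 - 2 * A + t ^ 2) ≤ c ^ 2 * (t ^ 2 * s ^ 2 - A ^ 2)) :
    t ≤ c * s := by
  rcases eq_or_lt_of_le hc with hc1 | hc1
  · rw [← hc1] at key3 ⊢
    have hAt : A = t ^ 2 := by nlinarith [sq_nonneg (A - t ^ 2)]
    nlinarith
  · by_contra hcon
    push_neg at hcon
    have h1 : c ^ 2 * s ^ 2 < t ^ 2 := by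
      nlinarith [pow_lt_pow_left₀ hcon (mul_nonneg (by linarith : (0:ℝ) ≤ c) hs) two_ne_zero]
    have hm := mul_le_mul_of_nonneg_left key3 (by positivity : (0:ℝ) ≤ c ^ 2)
    have h2 : (c ^ 2 * A - t ^ 2) ^ 2 ≤ (c ^ 2 - 1) * (t ^ 2 * (c ^ 2 * s ^ 2 - t ^ 2)) := by
      nlinarith [hm]
    have h3 : (c ^ 2 - 1) * (t ^ 2 * (c ^ 2 * s ^ 2 - t ^ 2)) < 0 :=
      mul_neg_of_pos_of_neg (by nlinarith)
        (mul_neg_of_pos_of_neg (by positivity) (by linarith))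
    nlinarith [sq_nonneg (c ^ 2 * A - t ^ 2)]

theorem aux_le {H : Type*} [NormedAddCommGroup H] [InnerProductSpace ℝ H]
    [CompleteSpace H]
    (P : H →L[ℝ] H) (hP : P.comp P = P) (hP0 : P ≠ 0) :
    ‖ContinuousLinearMap.id ℝ H - P‖ ≤ ‖P‖ := by
  have hc : 1 ≤ ‖P‖ := by
    obtain ⟨x, hx⟩ : ∃ x, P x ≠ 0 := by
      by_contra h
      push_neg at h
      exact hP0 (by ext x; simp [h x])
    have h1 : P (P x) = P x := DFunLike.congr_fun hP x
    have h2 : ‖P (P x)‖ ≤ ‖P‖ * ‖P x‖ := P.le_opNorm (P x)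
    rw [h1] at h2
    have : 0 < ‖P x‖ := norm_pos_iff.mpr hx
    nlinarith
  apply ContinuousLinearMap.opNorm_le_bound _ (by linarith)
  intro x
  simp only [ContinuousLinearMap.sub_apply, ContinuousLinearMap.id_apply]
  set y := x - P x with hy_def
  by_cases hy : y = 0
  · rw [hy]
    simpa using by positivity
  have ht : 0 < ‖y‖ := norm_pos_iff.mpr hy
  have hPy : P y = 0 := by
    have h1 : P (P x) = P x := DFunLike.congr_fun hP x
    simp [hy_def, map_sub, h1]
  set A : ℝ := inner ℝ x y with hA_def
  set u : H := x - (A / ‖y‖ ^ 2) • y with hu_def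
  have hPu : P u = x - y := by
    rw [hu_def, map_sub, map_smul, hPy, smul_zero, sub_zero, hy_def, sub_sub_cancel]
  have key : ‖P u‖ ≤ ‖P‖ * ‖u‖ := P.le_opNorm u
  have key2 : ‖P u‖ ^ 2 ≤ ‖P‖ ^ 2 * ‖u‖ ^ 2 := by
    have h0 := norm_nonneg (P u)
    nlinarith
  have hxy2 : ‖x - y‖ ^ 2 = ‖x‖ ^ 2 - 2 * A + ‖y‖ ^ 2 := by
    rw [@norm_sub_sq_real]
  have hu2 : ‖u‖ ^ 2 = ‖x‖ ^ 2 - A ^ 2 / ‖y‖ ^ 2 := by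
    rw [hu_def, @norm_sub_sq_real, real_inner_smul_right, norm_smul, mul_pow,
      Real.norm_eq_abs, sq_abs, ← hA_def]
    field_simp
    ring
  rw [hPu, hxy2, hu2] at key2
  have hCS : A ≤ ‖x‖ * ‖y‖ := real_inner_le_norm x y
  set c := ‖P‖
  set s := ‖x‖
  set t := ‖y‖
  have hs : 0 ≤ s := norm_nonneg x
  have key3 : t ^ 2 * (s ^ 2 - 2 * A + t ^ 2) ≤ c ^ 2 * (t ^ 2 * s ^ 2 - A ^ 2) := by
    have h := mul_le_mul_of_nonneg_left key2 (by positivity : (0:ℝ) ≤ t ^ 2)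
    have ht2 : t ^ 2 ≠ 0 := by positivity
    calc t ^ 2 * (s ^ 2 - 2 * A + t ^ 2)
        ≤ t ^ 2 * (c ^ 2 * (s ^ 2 - A ^ 2 / t ^ 2)) := h
      _ = c ^ 2 * (t ^ 2 * s ^ 2 - A ^ 2) := by field_simp
  -- now prove t ≤ c * s
  exact aux_scalar c s t A hc ht hs hCS key3

theorem stmt_10 {H : Type*} [NormedAddCommGroup H] [InnerProductSpace ℝ H]
    [CompleteSpace H]
    (P : H →L[ℝ] H) (hP : P.comp P = P)
    (hP0 : P ≠ 0) (hPid : P ≠ ContinuousLinearMap.id ℝ H) :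
    ‖ContinuousLinearMap.id ℝ H - P‖ = ‖P‖ := by
  set Q := ContinuousLinearMap.id ℝ H - P with hQ_def
  have hQ : Q.comp Q = Q := by
    ext x
    have h1 : P (P x) = P x := DFunLike.congr_fun hP x
    simp [hQ_def, map_sub, h1]
  have hQ0 : Q ≠ 0 := by
    intro h
    apply hPid
    have : ContinuousLinearMap.id ℝ H - P = 0 := h
    ext x
    have h3 := DFunLike.congr_fun this x
    simp only [ContinuousLinearMap.sub_apply, ContinuousLinearMap.id_apply,
      ContinuousLinearMap.zero_apply, sub_eq_zero] at h3
    simpa using h3.symm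
  have hPQ : ContinuousLinearMap.id ℝ H - Q = P := by
    rw [hQ_def, sub_sub_cancel]
  have h1 := aux_le P hP hP0
  have h2 := aux_le Q hQ hQ0
  rw [hPQ] at h2
  exact le_antisymm h1 h2
end
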